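/- Let S = ℂ[X,Y]/(Y² − X³ + 1), let x and y denote the images of X and Y in S, and regard S as an algebra over the polynomial ring R = ℂ[T] via the ℂ-algebra homomorphism R → S sending T to x³ (equivalently, to y² + 1). Then S cannot be generated by one element as an R-algebra: for every h ∈ S, the R-subalgebra of S generated by h is a proper subalgebra of S. -/

import Mathlib

noncomputable section

/-- The coordinate ring `S = ℂ[X,Y]/(Y² − X³ + 1)` of the affine curve `y² = x³ − 1`. -/
abbrev CurveRing : Type :=
  MvPolynomial (Fin 2) ℂ ⧸
    Ideal.span {(MvPolynomial.X 1 : MvPolynomial (Fin 2) ℂ) ^ 2 - MvPolynomial.X 0 ^ 3 + 1}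

/-- `x`, the image of `X` in `S`. -/
def curveX : CurveRing :=
  Ideal.Quotient.mk _ (MvPolynomial.X 0)

/-- `y`, the image of `Y` in `S`. -/
def curveY : CurveRing :=
  Ideal.Quotient.mk _ (MvPolynomial.X 1)

/-- `S` regarded as an algebra over `R = ℂ[T]` via the `ℂ`-algebra map `T ↦ x³`. -/
instance : Algebra (Polynomial ℂ) CurveRing :=
  ((Polynomial.aeval (curveX ^ 3) : Polynomial ℂ →ₐ[ℂ] CurveRing) :
    Polynomial ℂ →+* CurveRing).toAlgebra

namespace Stmt18

open Polynomial

abbrev Rx := Polynomial ℂ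

/-- The defining polynomial `Y² − (x³ − 1)` over `ℂ[x]`. -/
def rp : Polynomial Rx := X ^ 2 - C (X ^ 3 - 1)

abbrev N := AdjoinRoot rp

def io : Rx →+* N := AdjoinRoot.of rp

def yy : N := AdjoinRoot.root rp

def xx : N := io X

lemma rp_monic : rp.Monic := by
  unfold rp
  exact monic_X_pow_sub (by
    calc degree (C (X ^ 3 - 1 : Rx)) ≤ 0 := degree_C_le
    _ < 2 := by norm_num)

lemma rp_degree : rp.degree = 2 := degree_X_pow_sub_C (by norm_num) _

lemma yy_sq : yy * yy = io X ^ 3 - 1 := by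
  have h0 : AdjoinRoot.mk rp rp = 0 := AdjoinRoot.mk_self
  have h1 : (AdjoinRoot.mk rp) (X ^ 2) = AdjoinRoot.mk rp (C (X ^ 3 - 1)) := by
    rw [show (X ^ 2 : Polynomial Rx) = rp + C (X ^ 3 - 1) by rw [rp]; ring,
      map_add, h0, zero_add]
  have h2 : yy * yy = AdjoinRoot.mk rp (X ^ 2) := by
    rw [map_pow, AdjoinRoot.mk_X]; rw [pow_two]; rfl
  rw [h2, h1]
  show io (X ^ 3 - 1) = io X ^ 3 - 1
  rw [map_sub, map_pow, map_one]

/-- Every element of `N` can be written as `P + Q·y`. -/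
lemma repr' (z : N) : ∃ P Q : Rx, z = io P + io Q * yy := by
  induction z using AdjoinRoot.induction_on with
  | ih f =>
    refine ⟨(f %ₘ rp).coeff 0, (f %ₘ rp).coeff 1, ?_⟩
    have hmod : AdjoinRoot.mk rp f = AdjoinRoot.mk rp (f %ₘ rp) := by
      conv_lhs => rw [← modByMonic_add_div f rp]
      rw [map_add, map_mul, AdjoinRoot.mk_self, zero_mul, add_zero]
    have hdeg : (f %ₘ rp).degree ≤ 1 := by
      have h2 := degree_modByMonic_lt f rp_monic
      rw [rp_degree] at h2
      refine Order.le_of_lt_succ ?_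
      convert h2 using 2
      rfl
    have hr : f %ₘ rp = C ((f %ₘ rp).coeff 1) * X + C ((f %ₘ rp).coeff 0) :=
      eq_X_add_C_of_degree_le_one hdeg
    rw [hmod]
    conv_lhs => rw [hr]
    rw [map_add, map_mul, AdjoinRoot.mk_C, AdjoinRoot.mk_C, AdjoinRoot.mk_X]
    show io ((f %ₘ rp).coeff 1) * yy + io ((f %ₘ rp).coeff 0) = _
    ring

/-- Linear independence of `1, y` over `ℂ[x]`. -/
lemma indep {A B : Rx} (h : io A + io B * yy = 0) : A = 0 ∧ B = 0 := by
  have h1 : AdjoinRoot.mk rp (C A + C B * X) = 0 := by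
    rw [map_add, map_mul, AdjoinRoot.mk_C, AdjoinRoot.mk_C, AdjoinRoot.mk_X]
    exact h
  have h2 : rp ∣ C A + C B * X := AdjoinRoot.mk_eq_zero.mp h1
  have h3 : C A + C B * X = 0 := by
    by_contra hne
    have hlt : (C A + C B * X).degree < rp.degree := by
      rw [rp_degree]
      calc (C A + C B * X).degree ≤ max (C A).degree (C B * X).degree := degree_add_le _ _
        _ ≤ 1 := by
          apply max_le
          · exact le_trans degree_C_le (by norm_num)
          · exact le_trans (degree_C_mul_X_le _) (by norm_num)
        _ < 2 := by norm_num
    exact hne (eq_zero_of_dvd_of_degree_lt h2 hlt)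
  constructor
  · have := congrArg (fun p => Polynomial.coeff p 0) h3
    simpa using this
  · have := congrArg (fun p => Polynomial.coeff p 1) h3
    simpa using this

lemma indep' {A B A' B' : Rx} (h : io A + io B * yy = io A' + io B' * yy) :
    A = A' ∧ B = B' := by
  have h0 : io (A - A') + io (B - B') * yy = 0 := by
    rw [map_sub, map_sub, sub_mul]
    linear_combination h
  obtain ⟨h1, h2⟩ := indep h0
  exact ⟨sub_eq_zero.mp h1, sub_eq_zero.mp h2⟩

lemma mulExpand (A B a b : Rx) :
    (io A + io B * yy) * (io a + io b * yy)
      = io (A * a + B * b * (X ^ 3 - 1)) + io (A * b + B * a) * yy := by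
  simp only [map_add, map_mul, map_sub, map_one, map_pow]
  linear_combination (io B * io b) * yy_sq

/-! ### A primitive cube root of unity and the three symmetries -/

def ζ : ℂ := Complex.exp (2 * Real.pi * Complex.I / 3)

lemma zeta_prim : IsPrimitiveRoot ζ 3 := Complex.isPrimitiveRoot_exp 3 (by norm_num)

lemma zeta_cube : ζ ^ 3 = 1 := zeta_prim.pow_eq_one

lemma zeta_ne_one : ζ ≠ 1 := zeta_prim.ne_one (by norm_num)

/-- The substitution `x ↦ ζ·x` on `ℂ[x]`. -/
def cz : Rx →+* Rx := eval₂RingHom Polynomial.C (Polynomial.C ζ * X)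

lemma cz_C (c : ℂ) : cz (C c) = C c := eval₂_C _ _

lemma cz_X : cz X = C ζ * X := eval₂_X _ _

lemma cz_cube : cz (X ^ 3) = X ^ 3 := by
  rw [map_pow, cz_X, mul_pow, ← C_pow, zeta_cube, C_1, one_mul]

lemma X_dvd_cz_sub (P : Rx) : (X : Rx) ∣ cz P - P := by
  induction P using Polynomial.induction_on' with
  | add p q hp hq =>
    rw [map_add]
    have : cz p + cz q - (p + q) = (cz p - p) + (cz q - q) := by ring
    rw [this]
    exact dvd_add hp hq
  | monomial n a =>
    rcases Nat.eq_zero_or_pos n with rfl | hn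
    · simp only [Polynomial.monomial_zero_left, cz_C, sub_self]
      exact dvd_zero _
    · have hm : (Polynomial.monomial n a : Rx) = C a * X ^ n :=
        (C_mul_X_pow_eq_monomial).symm
      rw [hm, map_mul, cz_C, map_pow, cz_X]
      apply dvd_sub
      · exact Dvd.dvd.mul_left ((dvd_mul_left X (C ζ)).trans (dvd_pow_self _ hn.ne')) _
      · exact Dvd.dvd.mul_left (dvd_pow_self _ hn.ne') _

lemma tau_aux : rp.eval₂ io (-yy) = 0 := by
  rw [show rp.eval₂ io (-yy) = (X ^ 2 - C (X ^ 3 - 1) : Polynomial Rx).eval₂ io (-yy) from rfl]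
  rw [eval₂_sub, eval₂_pow, eval₂_X, eval₂_C]
  rw [show (-yy) ^ 2 = yy * yy by ring, yy_sq, map_sub, map_pow, map_one]
  ring

/-- `y ↦ -y`. -/
def tau : N →+* N := AdjoinRoot.lift io (-yy) tau_aux

lemma tau_io (P : Rx) : tau (io P) = io P :=
  RingHom.congr_fun (AdjoinRoot.lift_comp_of tau_aux) P

lemma tau_yy : tau yy = -yy := AdjoinRoot.lift_root tau_aux

lemma rho_aux : rp.eval₂ (io.comp cz) yy = 0 := by
  rw [show rp.eval₂ (io.comp cz) yy = (X ^ 2 - C (X ^ 3 - 1) : Polynomial Rx).eval₂ (io.comp cz) yy from rfl]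
  rw [eval₂_sub, eval₂_pow, eval₂_X, eval₂_C, RingHom.comp_apply,
    show cz (X ^ 3 - 1 : Rx) = X ^ 3 - 1 by rw [map_sub, map_one, cz_cube],
    pow_two, yy_sq, map_sub, map_pow, map_one]
  ring

/-- `x ↦ ζ·x`. -/
def rho : N →+* N := AdjoinRoot.lift (io.comp cz) yy rho_aux

lemma rho_io (P : Rx) : rho (io P) = io (cz P) :=
  RingHom.congr_fun (AdjoinRoot.lift_comp_of rho_aux) P

lemma rho_yy : rho yy = yy := AdjoinRoot.lift_root rho_aux

/-- `x ↦ ζ·x, y ↦ -y`. -/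
def gg : N →+* N := rho.comp tau

lemma gg_io (P : Rx) : gg (io P) = io (cz P) := by
  rw [gg, RingHom.comp_apply, tau_io, rho_io]

lemma gg_yy : gg yy = -yy := by
  rw [gg, RingHom.comp_apply, tau_yy, map_neg, rho_yy]

lemma algC (c : ℂ) : algebraMap ℂ N c = io (C c) := rfl

lemma xx_pow3 : xx ^ 3 = io (X ^ 3) := by unfold xx; rw [map_pow]

lemma tau_const (c : ℂ) : tau (algebraMap ℂ N c) = algebraMap ℂ N c := by
  rw [algC, tau_io]

lemma rho_const (c : ℂ) : rho (algebraMap ℂ N c) = algebraMap ℂ N c := by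
  rw [algC, rho_io, cz_C]

lemma gg_const (c : ℂ) : gg (algebraMap ℂ N c) = algebraMap ℂ N c := by
  rw [algC, gg_io, cz_C]

lemma tau_x3 : tau (xx ^ 3) = xx ^ 3 := by rw [xx_pow3, tau_io]

lemma rho_x3 : rho (xx ^ 3) = xx ^ 3 := by rw [xx_pow3, rho_io, cz_cube]

lemma gg_x3 : gg (xx ^ 3) = xx ^ 3 := by rw [xx_pow3, gg_io, cz_cube]

/-- Key divisibility: for a symmetry `σ` fixing `ℂ` and `x³`, if `z` lies in the
subalgebra generated by `x³` and `h`, then `σ h - h` divides `σ z - z`. -/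
lemma keyDvd (σ : N →+* N) (hc : ∀ c : ℂ, σ (algebraMap ℂ N c) = algebraMap ℂ N c)
    (hx : σ (xx ^ 3) = xx ^ 3) (h z : N)
    (hz : z ∈ Algebra.adjoin ℂ ({xx ^ 3, h} : Set N)) : σ h - h ∣ σ z - z := by
  refine Algebra.adjoin_induction ?_ ?_ ?_ ?_ hz
  · rintro x (rfl | rfl)
    · rw [hx, sub_self]
      exact dvd_zero _
    · exact dvd_refl _
  · intro r
    rw [hc, sub_self]
    exact dvd_zero _
  · intro u v _ _ hu hv
    rw [map_add, show σ u + σ v - (u + v) = (σ u - u) + (σ v - v) by ring]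
    exact dvd_add hu hv
  · intro u v _ _ hu hv
    rw [map_mul, show σ u * σ v - u * v = σ u * (σ v - v) + (σ u - u) * v by ring]
    exact dvd_add (hv.mul_left _) (hu.mul_right _)

/-- The main theorem, in the model `N`. -/
lemma main (hh : N) (Htop : Algebra.adjoin ℂ ({xx ^ 3, hh} : Set N) = ⊤) : False := by
  obtain ⟨P, Q, hPQ⟩ := repr' hh
  have memAll : ∀ z : N, z ∈ Algebra.adjoin ℂ ({xx ^ 3, hh} : Set N) := by
    intro z; rw [Htop]; exact Algebra.mem_top
  -- Step 1 : use τ to show that Q is a nonzero constant β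
  obtain ⟨w, hw⟩ := keyDvd tau tau_const tau_x3 hh yy (memAll yy)
  obtain ⟨a, b, hab⟩ := repr' w
  have hτh : tau hh - hh = io 0 + io (-(2 * Q)) * yy := by
    rw [hPQ, map_add, map_mul, tau_io, tau_io, tau_yy]
    simp only [map_zero, map_neg, map_mul, map_ofNat]
    ring
  have hτy : tau yy - yy = io 0 + io (-2) * yy := by
    rw [tau_yy]
    simp only [map_zero, map_neg, map_ofNat]
    ring
  rw [hτy, hτh, hab, mulExpand] at hw
  obtain ⟨e1, e2⟩ := indep' hw
  have hQa : Q * a = 1 := by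
    have h2 : (2 : Rx) * (Q * a - 1) = 0 := by linear_combination e2
    rcases mul_eq_zero.mp h2 with h | h
    · exact absurd h two_ne_zero
    · exact sub_eq_zero.mp h
  obtain ⟨β, hβu, hQC⟩ := Polynomial.isUnit_iff.mp (IsUnit.of_mul_eq_one _ hQa)
  have hβ0 : β ≠ 0 := hβu.ne_zero
  -- Step 2 : use ρ to show that `cz P - P = γ·x` with γ a nonzero constant
  obtain ⟨w2, hw2⟩ := keyDvd rho rho_const rho_x3 hh xx (memAll xx)
  obtain ⟨a2, b2, hab2⟩ := repr' w2
  have hρh : rho hh - hh = io (cz P - P) + io 0 * yy := by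
    rw [hPQ, map_add, map_mul, rho_io, rho_io, rho_yy, ← hQC, cz_C]
    simp only [map_zero, map_sub]
    ring
  have hρx : rho xx - xx = io ((C ζ - 1) * X) + io 0 * yy := by
    unfold xx
    rw [rho_io, cz_X]
    simp only [map_zero, map_mul, map_sub, map_one]
    ring
  rw [hρx, hρh, hab2, mulExpand] at hw2
  obtain ⟨f1, f2⟩ := indep' hw2
  obtain ⟨d1, hd1⟩ := X_dvd_cz_sub P
  have hd1a : d1 * a2 = C ζ - 1 := by
    apply mul_left_cancel₀ (Polynomial.X_ne_zero (R := ℂ))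
    linear_combination -f1 - a2 * hd1
  have hCζu : IsUnit (C ζ - (1 : Rx)) := by
    rw [show (C ζ - (1 : Rx)) = C (ζ - 1) by rw [map_sub, map_one]]
    exact Polynomial.isUnit_C.mpr (isUnit_iff_ne_zero.mpr (sub_ne_zero.mpr zeta_ne_one))
  have hd1u : IsUnit d1 := isUnit_of_mul_isUnit_left (by rw [hd1a]; exact hCζu)
  obtain ⟨γ, hγu, hd1C⟩ := Polynomial.isUnit_iff.mp hd1u
  have hγ0 : γ ≠ 0 := hγu.ne_zero
  have hd : cz P - P = X * C γ := by rw [hd1, hd1C]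
  -- Step 3 : use g to derive an impossible polynomial identity
  obtain ⟨w3, hw3⟩ := keyDvd gg gg_const gg_x3 hh xx (memAll xx)
  obtain ⟨a3, b3, hab3⟩ := repr' w3
  have hgh : gg hh - hh = io (cz P - P) + io (-(2 * C β)) * yy := by
    rw [hPQ, map_add, map_mul, gg_io, gg_io, gg_yy, ← hQC, cz_C]
    simp only [map_neg, map_mul, map_ofNat, map_sub]
    ring
  have hgx : gg xx - xx = io ((C ζ - 1) * X) + io 0 * yy := by
    unfold xx
    rw [gg_io, cz_X]
    simp only [map_zero, map_mul, map_sub, map_one]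
    ring
  rw [hgx, hgh, hab3, mulExpand] at hw3
  obtain ⟨g1, g2⟩ := indep' hw3
  rw [hd] at g1 g2
  have E3 : b3 * ((X * C γ) * (X * C γ) - 4 * (C β) ^ 2 * (X ^ 3 - 1))
      = (2 * C β) * ((C ζ - 1) * X) := by
    linear_combination (-(2 * C β)) * g1 - (X * C γ) * g2
  have hCζ0 : (C ζ - 1 : Rx) ≠ 0 := by
    rw [show (C ζ - (1 : Rx)) = C (ζ - 1) by rw [map_sub, map_one], Ne, Polynomial.C_eq_zero]
    exact sub_ne_zero.mpr zeta_ne_one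
  have hb3 : b3 ≠ 0 := by
    intro h0
    rw [h0, zero_mul] at E3
    have hne : ((2 : Rx) * C β) * ((C ζ - 1) * X) ≠ 0 := by
      refine mul_ne_zero (mul_ne_zero two_ne_zero ?_) (mul_ne_zero hCζ0 Polynomial.X_ne_zero)
      rw [Ne, Polynomial.C_eq_zero]
      exact hβ0
    exact hne E3.symm
  have hG : ((X * C γ) * (X * C γ) - 4 * (C β) ^ 2 * (X ^ 3 - 1) : Rx)
      = C (-(4 * β ^ 2)) * X ^ 3 + C (γ * γ) * X ^ 2 + C 0 * X + C (4 * β ^ 2) := by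
    simp only [map_neg, map_mul, map_pow, map_ofNat, map_zero]
    ring
  have h4β : -(4 * β ^ 2) ≠ 0 := by
    simp only [neg_ne_zero]
    exact mul_ne_zero (by norm_num) (pow_ne_zero _ hβ0)
  have hGdeg : ((X * C γ) * (X * C γ) - 4 * (C β) ^ 2 * (X ^ 3 - 1) : Rx).natDegree = 3 := by
    rw [hG]
    exact Polynomial.natDegree_cubic h4β
  have hG0 : ((X * C γ) * (X * C γ) - 4 * (C β) ^ 2 * (X ^ 3 - 1) : Rx) ≠ 0 := by
    intro hz
    rw [hz] at hGdeg
    simp at hGdeg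
  have hdeg := congrArg Polynomial.natDegree E3
  rw [Polynomial.natDegree_mul hb3 hG0, hGdeg] at hdeg
  have hR : ((2 : Rx) * C β) * ((C ζ - 1) * X) = C (2 * β * (ζ - 1)) * X := by
    simp only [map_mul, map_sub, map_one, map_ofNat]
    ring
  rw [hR, Polynomial.natDegree_C_mul_X _
    (mul_ne_zero (mul_ne_zero two_ne_zero hβ0) (sub_ne_zero.mpr zeta_ne_one))] at hdeg
  omega

/-! ### Transport from `CurveRing` to the model `N` -/

def ΦAux : MvPolynomial (Fin 2) ℂ →ₐ[ℂ] N :=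
  MvPolynomial.aeval ![xx, yy]

lemma ΦAux_rel :
    ΦAux ((MvPolynomial.X 1 : MvPolynomial (Fin 2) ℂ) ^ 2 - MvPolynomial.X 0 ^ 3 + 1) = 0 := by
  unfold ΦAux
  simp only [map_add, map_sub, map_pow, MvPolynomial.aeval_X, map_one,
    Matrix.cons_val_one, Matrix.head_cons, Matrix.cons_val_zero]
  rw [pow_two, yy_sq]
  unfold xx
  ring

def Φ : CurveRing →ₐ[ℂ] N :=
  Ideal.Quotient.liftₐ _ ΦAux (by
    intro a ha
    rw [Ideal.mem_span_singleton] at ha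
    obtain ⟨c, rfl⟩ := ha
    rw [map_mul, ΦAux_rel, zero_mul])

lemma Φ_mk (p : MvPolynomial (Fin 2) ℂ) : Φ (Ideal.Quotient.mk _ p) = ΦAux p := by
  unfold Φ
  rw [Ideal.Quotient.liftₐ_apply]
  rfl

lemma Φ_X : Φ curveX = xx := by
  rw [curveX, Φ_mk]
  unfold ΦAux
  simp [MvPolynomial.aeval_X]

lemma Φ_Y : Φ curveY = yy := by
  rw [curveY, Φ_mk]
  unfold ΦAux
  simp [MvPolynomial.aeval_X]

lemma io_eq_aeval (P : Rx) : io P = Polynomial.aeval xx P := by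
  have h : io = ((Polynomial.aeval xx : Rx →ₐ[ℂ] N) : Rx →+* N) := by
    apply Polynomial.ringHom_ext
    · intro c
      rw [← algC c]
      simp [Polynomial.aeval_C]
    · simp only [RingHom.coe_coe, Polynomial.aeval_X]
      rfl
  rw [h]
  rfl

lemma Φ_surj : Function.Surjective Φ := by
  intro z
  obtain ⟨P, Q, rfl⟩ := repr' z
  refine ⟨Polynomial.aeval curveX P + Polynomial.aeval curveX Q * curveY, ?_⟩
  have h1 : ∀ R : Rx, Φ (Polynomial.aeval curveX R) = io R := by
    intro R
    rw [← Polynomial.aeval_algHom_apply, Φ_X, ← io_eq_aeval]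
  rw [map_add, map_mul, h1, h1, Φ_Y]

end Stmt18

/-- `S = ℂ[X,Y]/(Y² − X³ + 1)`, viewed as an algebra over
`R = ℂ[T]` via `T ↦ x³`, cannot be generated by one element as an `R`-algebra: for
every `h ∈ S` the `R`-subalgebra generated by `h` is proper. -/
theorem stmt_18 (h : CurveRing) :
    Algebra.adjoin (Polynomial ℂ) ({h} : Set CurveRing) ≠ ⊤ := by
  intro hT
  -- First, replace the `ℂ[T]`-subalgebra generated by `h` by the
  -- `ℂ`-subalgebra generated by `x³` and `h`.
  have HB : Algebra.adjoin ℂ ({curveX ^ 3, h} : Set CurveRing) = ⊤ := by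
    rw [Algebra.eq_top_iff]
    intro z
    have hz : z ∈ Algebra.adjoin (Polynomial ℂ) ({h} : Set CurveRing) := by
      rw [hT]; exact Algebra.mem_top
    refine Algebra.adjoin_induction ?_ ?_ ?_ ?_ hz
    · rintro x rfl
      exact Algebra.subset_adjoin (by simp)
    · intro r
      have heq : algebraMap (Polynomial ℂ) CurveRing r = Polynomial.aeval (curveX ^ 3) r := rfl
      rw [heq]
      have h1 : Polynomial.aeval (curveX ^ 3) r
          ∈ Algebra.adjoin ℂ ({curveX ^ 3} : Set CurveRing) := by
        rw [Algebra.adjoin_singleton_eq_range_aeval]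
        exact ⟨r, rfl⟩
      exact Algebra.adjoin_mono (by simp) h1
    · intro u v _ _ hu hv
      exact add_mem hu hv
    · intro u v _ _ hu hv
      exact mul_mem hu hv
  -- Transport along the surjection `Φ` to the model `N`.
  have HN : Algebra.adjoin ℂ ({Stmt18.xx ^ 3, Stmt18.Φ h} : Set Stmt18.N) = ⊤ := by
    have h1 := AlgHom.map_adjoin Stmt18.Φ ({curveX ^ 3, h} : Set CurveRing)
    rw [HB, Algebra.map_top, (AlgHom.range_eq_top _).mpr Stmt18.Φ_surj,
      Set.image_pair, map_pow, Stmt18.Φ_X] at h1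
    exact h1.symm
  exact Stmt18.main _ HN
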